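/- (Channel-merging inequality.) Define g : (0,∞) → ℝ by g(x) = x·log(1 + 1/x²), and let λ ∈ (0,1) and a, b > 0 satisfy a/λ ≤ 1 and b/(1−λ) ≤ 1. Then λ·g(a/λ) + (1−λ)·g(b/(1−λ)) ≤ g(a + b). In particular, since λ·(a/λ) + (1−λ)·(b/(1−λ)) = a + b ≤ 1, the inequality follows from the concavity of g on (0,1]. -/

import Mathlib

/-- The function `g x = x log (1 + 1/x²)` from the generalized water-filling
analysis. -/
noncomputable def gWF (x : ℝ) : ℝ := x * Real.log (1 + 1 / x ^ 2)

noncomputable def gWF' (x : ℝ) : ℝ := Real.log (1 + 1 / x ^ 2) - 2 / (x ^ 2 + 1)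

noncomputable def gWF'' (x : ℝ) : ℝ := 2 * (x ^ 2 - 1) / (x * (x ^ 2 + 1) ^ 2)

lemma hu_deriv {x : ℝ} (hx : x ≠ 0) :
    HasDerivAt (fun y : ℝ => 1 + 1 / y ^ 2) (-2 / x ^ 3) x := by
  have h1 : HasDerivAt (fun y : ℝ => y ^ 2) (2 * x) x := by
    simpa using hasDerivAt_pow 2 x
  have h2 : HasDerivAt (fun y : ℝ => (y ^ 2)⁻¹) (-(2 * x) / (x ^ 2) ^ 2) x :=
    h1.inv (pow_ne_zero 2 hx)
  have hval : (0 : ℝ) + -(2 * x) / (x ^ 2) ^ 2 = -2 / x ^ 3 := by field_simp; ring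
  have h3 := (hasDerivAt_const x (1 : ℝ)).add h2
  rw [hval] at h3
  exact h3.congr_of_eventuallyEq (Filter.Eventually.of_forall fun y => by simp [one_div])

lemma upos {x : ℝ} (hx : 0 < x) : 0 < 1 + 1 / x ^ 2 := by positivity

lemma gWF_hasDeriv {x : ℝ} (hx : 0 < x) : HasDerivAt gWF (gWF' x) x := by
  have hlog : HasDerivAt (fun y : ℝ => Real.log (1 + 1 / y ^ 2))
      ((-2 / x ^ 3) / (1 + 1 / x ^ 2)) x := (hu_deriv hx.ne').log (upos hx).ne'
  have h := (hasDerivAt_id x).mul hlog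
  refine (h.congr_of_eventuallyEq (Filter.Eventually.of_forall fun y => rfl)).congr_deriv ?_
  have hx2 : (x : ℝ) ^ 2 + 1 ≠ 0 := by positivity
  unfold gWF'
  simp only [id]
  field_simp
  ring

lemma gWF'_hasDeriv {x : ℝ} (hx : 0 < x) : HasDerivAt gWF' (gWF'' x) x := by
  have hlog : HasDerivAt (fun y : ℝ => Real.log (1 + 1 / y ^ 2))
      ((-2 / x ^ 3) / (1 + 1 / x ^ 2)) x := (hu_deriv hx.ne').log (upos hx).ne'
  have hden : HasDerivAt (fun y : ℝ => y ^ 2 + 1) (2 * x) x := by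
    simpa using (hasDerivAt_pow 2 x).add_const 1
  have hdenne : (x : ℝ) ^ 2 + 1 ≠ 0 := by positivity
  have h := hlog.sub ((hden.inv hdenne).const_mul 2)
  refine (h.congr_of_eventuallyEq (Filter.Eventually.of_forall fun y => rfl)).congr_deriv ?_
  unfold gWF''
  have hxne : x ≠ 0 := hx.ne'
  field_simp
  ring

lemma gWF_concave : ConcaveOn ℝ (Set.Ioc (0 : ℝ) 1) gWF := by
  have hint : interior (Set.Ioc (0 : ℝ) 1) = Set.Ioo 0 1 := interior_Ioc
  refine concaveOn_of_hasDerivWithinAt2_nonpos (f' := gWF') (f'' := gWF'')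
    (convex_Ioc 0 1) ?_ ?_ ?_ ?_
  · intro x hx
    exact (gWF_hasDeriv hx.1).continuousAt.continuousWithinAt
  · intro x hx
    rw [hint] at hx
    exact (gWF_hasDeriv hx.1).hasDerivWithinAt
  · intro x hx
    rw [hint] at hx
    exact (gWF'_hasDeriv hx.1).hasDerivWithinAt
  · intro x hx
    rw [hint] at hx
    obtain ⟨hx0, hx1⟩ := hx
    unfold gWF''
    apply div_nonpos_of_nonpos_of_nonneg
    · nlinarith
    · positivity

/-- Channel-merging inequality: for `λ ∈ (0,1)` and `a, b > 0`
with `a/λ ≤ 1` and `b/(1−λ) ≤ 1`, one has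
`λ g(a/λ) + (1−λ) g(b/(1−λ)) ≤ g(a+b)`. -/
theorem stmt_19 (lam a b : ℝ) (hlam : lam ∈ Set.Ioo (0 : ℝ) 1)
    (ha : 0 < a) (hb : 0 < b)
    (ha1 : a / lam ≤ 1) (hb1 : b / (1 - lam) ≤ 1) :
    lam * gWF (a / lam) + (1 - lam) * gWF (b / (1 - lam)) ≤ gWF (a + b) := by
  obtain ⟨hl0, hl1⟩ := hlam
  have hl1' : 0 < 1 - lam := by linarith
  have hx : a / lam ∈ Set.Ioc (0 : ℝ) 1 := ⟨div_pos ha hl0, ha1⟩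
  have hy : b / (1 - lam) ∈ Set.Ioc (0 : ℝ) 1 := ⟨div_pos hb hl1', hb1⟩
  have h := gWF_concave.2 hx hy (le_of_lt hl0) (le_of_lt hl1') (by ring)
  have e1 : lam * (a / lam) = a := mul_div_cancel₀ a hl0.ne'
  have e2 : (1 - lam) * (b / (1 - lam)) = b := mul_div_cancel₀ b hl1'.ne'
  simpa [smul_eq_mul, e1, e2] using h
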